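/- Fix $\alpha_1 \ne 0$, $\alpha_2 > 0$, $\sigma > 0$, and an interval $[x_{\min}, x_{\max}]$ with $0 < x_{\min} < x_{\max}$. Define $h(x_1, x_2) = e^{-2\alpha_2(1/x_1 + 1/x_2)} (1/x_1 - 1/x_2)^2$ for $x_1, x_2 \in [x_{\min}, x_{\max}]$. Then $h$ is maximized (over ordered pairs with $x_1 \le x_2$) at $x_2^* = x_{\max}$ and $x_1^* = \max\left(\frac{\alpha_2 x_{\max}}{\alpha_2 + x_{\max}}, x_{\min}\right)$. -/

import Mathlib

lemma keyA (α2 t : ℝ) (hα : 0 < α2) (ht : 0 ≤ t) :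
    Real.exp (-2 * α2 * t) * t ^ 2 ≤ Real.exp (-2) * (1 / α2) ^ 2 := by
  have h1 : α2 * t ≤ Real.exp (α2 * t - 1) := by
    have := Real.add_one_le_exp (α2 * t - 1); linarith
  have h2 : Real.exp (α2 * t - 1) * Real.exp (α2 * t - 1)
      = Real.exp (2 * α2 * t) * Real.exp (-2) := by
    rw [← Real.exp_add, ← Real.exp_add]; ring_nf
  have h3 : Real.exp (-2 * α2 * t) * Real.exp (2 * α2 * t) = 1 := by
    rw [← Real.exp_add]; norm_num
  have h4 : (α2 * t) ^ 2 ≤ Real.exp (2 * α2 * t) * Real.exp (-2) := by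
    nlinarith [h1, h2, mul_nonneg hα.le ht, Real.exp_pos (α2 * t - 1)]
  have h5 : Real.exp (-2 * α2 * t) * (α2 * t) ^ 2 ≤ Real.exp (-2) := by
    have h6 := mul_le_mul_of_nonneg_left h4 (Real.exp_pos (-2 * α2 * t)).le
    have e : Real.exp (-2 * α2 * t) * (Real.exp (2 * α2 * t) * Real.exp (-2))
        = (Real.exp (-2 * α2 * t) * Real.exp (2 * α2 * t)) * Real.exp (-2) := by ring
    rw [e, h3, one_mul] at h6
    exact h6
  have hα2 : (0:ℝ) < α2 ^ 2 := by positivity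
  rw [div_pow, one_pow, mul_one_div, le_div_iff₀ hα2]
  nlinarith [h5]

lemma keyB (α2 t T : ℝ) (hα : 0 < α2) (ht : 0 ≤ t) (htT : t ≤ T) (hT : α2 * T ≤ 1) :
    Real.exp (-2 * α2 * t) * t ^ 2 ≤ Real.exp (-2 * α2 * T) * T ^ 2 := by
  have h1 : α2 * (t - T) + 1 ≤ Real.exp (α2 * (t - T)) := by
    have := Real.add_one_le_exp (α2 * (t - T)); linarith
  have h0 : 0 ≤ 1 + α2 * (t - T) := by nlinarith
  have hTpos : 0 ≤ T := le_trans ht htT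
  have h2 : t ≤ T * (1 + α2 * (t - T)) := by
    nlinarith [mul_nonneg (sub_nonneg.mpr htT) (sub_nonneg.mpr hT)]
  have h3 : t ≤ T * Real.exp (α2 * (t - T)) := by
    refine h2.trans ?_
    exact mul_le_mul_of_nonneg_left (by linarith) hTpos
  have h4 : t ^ 2 ≤ T ^ 2 * (Real.exp (α2 * (t - T)) * Real.exp (α2 * (t - T))) := by
    nlinarith [h3, Real.exp_pos (α2 * (t - T)),
      mul_nonneg hTpos (Real.exp_pos (α2 * (t - T))).le]
  have h5 : Real.exp (α2 * (t - T)) * Real.exp (α2 * (t - T))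
      = Real.exp (2 * α2 * t) * Real.exp (-2 * α2 * T) := by
    rw [← Real.exp_add, ← Real.exp_add]; ring_nf
  have h6 : Real.exp (-2 * α2 * t) * Real.exp (2 * α2 * t) = 1 := by
    rw [← Real.exp_add]; norm_num
  rw [h5] at h4
  have h7 := mul_le_mul_of_nonneg_left h4 (Real.exp_pos (-2 * α2 * t)).le
  have e : Real.exp (-2 * α2 * t) * (T ^ 2 * (Real.exp (2 * α2 * t) * Real.exp (-2 * α2 * T)))
      = (Real.exp (-2 * α2 * t) * Real.exp (2 * α2 * t)) * (T ^ 2 * Real.exp (-2 * α2 * T)) := by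
    ring
  rw [e, h6, one_mul] at h7
  nlinarith [h7]

theorem stmt6 (α2 xmin xmax : ℝ) (hα2 : 0 < α2) (hmin : 0 < xmin) (h : xmin < xmax)
    (h' : ℝ → ℝ → ℝ)
    (hdef : ∀ x1 x2, h' x1 x2 =
      Real.exp (-2 * α2 * (1 / x1 + 1 / x2)) * (1 / x1 - 1 / x2) ^ 2) :
    ∀ x1 x2 : ℝ, xmin ≤ x1 → x1 ≤ x2 → x2 ≤ xmax →
      h' x1 x2 ≤ h' (max (α2 * xmax / (α2 + xmax)) xmin) xmax := by
  intro x1 x2 hx1 h12 hx2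
  have hx1p : 0 < x1 := lt_of_lt_of_le hmin hx1
  have hx2p : 0 < x2 := lt_of_lt_of_le hx1p h12
  have hxmaxp : 0 < xmax := hmin.trans h
  have hα2' : α2 ≠ 0 := ne_of_gt hα2
  rw [hdef, hdef]
  set u : ℝ := 1 / x1 with hu
  set v : ℝ := 1 / x2 with hv
  set b : ℝ := 1 / xmax with hb
  have hbv : b ≤ v := one_div_le_one_div_of_le hx2p hx2
  have hvu : v ≤ u := one_div_le_one_div_of_le hx1p h12
  have hua : u ≤ 1 / xmin := one_div_le_one_div_of_le hmin hx1
  have step1 : Real.exp (-2 * α2 * (u + v)) * (u - v) ^ 2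
      ≤ Real.exp (-2 * α2 * (u + b)) * (u - b) ^ 2 := by
    have e1 : Real.exp (-2 * α2 * (u + v)) ≤ Real.exp (-2 * α2 * (u + b)) :=
      Real.exp_le_exp.mpr (by nlinarith)
    have e2 : (u - v) ^ 2 ≤ (u - b) ^ 2 :=
      pow_le_pow_left₀ (by linarith) (by linarith) 2
    exact mul_le_mul e1 e2 (sq_nonneg _) (Real.exp_pos _).le
  refine step1.trans ?_
  have hden : (0:ℝ) < α2 + xmax := by linarith
  have hub : 0 ≤ u - b := by linarith
  have el : Real.exp (-2 * α2 * (u + b)) * (u - b) ^ 2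
      = Real.exp (-(4 * α2 * b)) * (Real.exp (-2 * α2 * (u - b)) * (u - b) ^ 2) := by
    rw [show -2 * α2 * (u + b) = -(4 * α2 * b) + -2 * α2 * (u - b) by ring, Real.exp_add]
    ring
  rcases le_total xmin (α2 * xmax / (α2 + xmax)) with hc | hc
  · rw [max_eq_left hc]
    have hinv : 1 / (α2 * xmax / (α2 + xmax)) = b + 1 / α2 := by
      rw [hb]; field_simp
    rw [hinv]
    have key := keyA α2 (u - b) hα2 hub
    have er : Real.exp (-2 * α2 * (b + 1 / α2 + b)) * (b + 1 / α2 - b) ^ 2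
        = Real.exp (-(4 * α2 * b)) * (Real.exp (-2) * (1 / α2) ^ 2) := by
      have e1 : b + 1 / α2 - b = 1 / α2 := by ring
      have e2 : -2 * α2 * (b + 1 / α2 + b) = -(4 * α2 * b) + (-2) := by
        field_simp; ring
      rw [e1, e2, Real.exp_add]; ring
    rw [el, er]
    exact mul_le_mul_of_nonneg_left key (Real.exp_pos _).le
  · rw [max_eq_right hc]
    have hc' : α2 * xmax ≤ xmin * (α2 + xmax) := by
      have := (div_le_iff₀ hden).mp hc; linarith
    have hT : α2 * (1 / xmin - b) ≤ 1 := by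
      rw [hb]
      have e : α2 * (1 / xmin - 1 / xmax) = (α2 * xmax - α2 * xmin) / (xmin * xmax) := by
        field_simp
      rw [e, div_le_one (by positivity)]
      nlinarith
    have key := keyB α2 (u - b) (1 / xmin - b) hα2 hub (by linarith) hT
    have er : Real.exp (-2 * α2 * (1 / xmin + b)) * (1 / xmin - b) ^ 2
        = Real.exp (-(4 * α2 * b))
          * (Real.exp (-2 * α2 * (1 / xmin - b)) * (1 / xmin - b) ^ 2) := by
      rw [show -2 * α2 * (1 / xmin + b) = -(4 * α2 * b) + -2 * α2 * (1 / xmin - b) by ring,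
        Real.exp_add]
      ring
    rw [el, er]
    exact mul_le_mul_of_nonneg_left key (Real.exp_pos _).le
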